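/- Let 𝔽 be ℝ or ℂ. If V is a linear subspace of 𝔽ⁿ such that every two elements of V form a parallel pair with respect to the ℓ∞-norm, then V has dimension at most 1. -/

import Mathlib

open scoped ENNReal

/-- Two vectors in a normed space over `𝕜` form a *parallel pair* if
`‖x + μ • y‖ = ‖x‖ + ‖y‖` for some scalar `μ` with `|μ| = 1`. -/
def ParallelPair (𝕜 : Type*) {E : Type*} [RCLike 𝕜] [NormedAddCommGroup E] [NormedSpace 𝕜 E]
    (x y : E) : Prop :=
  ∃ μ : 𝕜, ‖μ‖ = 1 ∧ ‖x + μ • y‖ = ‖x‖ + ‖y‖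

/-- If `V` is a linear subspace of `𝔽ⁿ` (`𝔽 = ℝ` or `ℂ`, with the `ℓ∞`-norm, i.e. the
sup norm on `Fin n → 𝕜`) in which any two elements are parallel, then `dim V ≤ 1`. -/
theorem linfty_pairwise_parallel_subspace_dim_le_one {𝕜 : Type*} [RCLike 𝕜] {n : ℕ}
    (V : Submodule 𝕜 (Fin n → 𝕜))
    (h : ∀ x ∈ V, ∀ y ∈ V, ParallelPair 𝕜 x y) :
    Module.finrank 𝕜 V ≤ 1 := by
  classical
  rcases eq_or_ne V ⊥ with rfl | hV
  · simp
  obtain ⟨v0, hv0V, hv0⟩ := Submodule.exists_mem_ne_zero_of_ne_bot hV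
  have hne : Nonempty (Fin n) := by
    by_contra hcon
    exact hv0 (funext fun j => absurd ⟨j⟩ hcon)
  -- key: parallel pairs share a coordinate where both attain their norms
  have key : ∀ x ∈ V, ∀ y ∈ V, ∃ j, ‖x j‖ = ‖x‖ ∧ ‖y j‖ = ‖y‖ := by
    intro x hx y hy
    obtain ⟨μ, hμ, hpar⟩ := h x hx y hy
    obtain ⟨j, -, hj⟩ := Finset.exists_mem_eq_sup Finset.univ Finset.univ_nonempty
      (fun i => ‖(x + μ • y) i‖₊)
    have hnorm : ‖x + μ • y‖ = ‖(x + μ • y) j‖ := by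
      rw [Pi.norm_def, hj]; rfl
    have h1 : ‖x j‖ ≤ ‖x‖ := norm_le_pi_norm x j
    have h2 : ‖y j‖ ≤ ‖y‖ := norm_le_pi_norm y j
    have h3 : ‖(x + μ • y) j‖ ≤ ‖x j‖ + ‖y j‖ := by
      simp only [Pi.add_apply, Pi.smul_apply, smul_eq_mul]
      calc ‖x j + μ * y j‖ ≤ ‖x j‖ + ‖μ * y j‖ := norm_add_le _ _
        _ = ‖x j‖ + ‖y j‖ := by rw [norm_mul, hμ, one_mul]
    rw [hpar] at hnorm
    exact ⟨j, by constructor <;> linarith⟩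
  -- choose a nonzero x ∈ V with minimal number of norm-attaining coordinates
  set A : (Fin n → 𝕜) → Finset (Fin n) :=
    fun v => Finset.univ.filter (fun j => ‖v j‖ = ‖v‖) with hA
  have hP : ∃ k, ∃ v, v ∈ V ∧ v ≠ 0 ∧ (A v).card = k := ⟨_, v0, hv0V, hv0, rfl⟩
  obtain ⟨x, hxV, hx0, hcard⟩ := Nat.find_spec hP
  set m := Nat.find hP with hm
  have hmin : ∀ w, w ∈ V → w ≠ 0 → m ≤ (A w).card := fun w hw hw0 =>
    Nat.find_min' hP ⟨w, hw, hw0, rfl⟩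
  have hxpos : (0:ℝ) < ‖x‖ := norm_pos_iff.2 hx0
  -- claim: every z ∈ V is a multiple of x
  have claim : ∀ z ∈ V, ∃ c : 𝕜, z = c • x := by
    by_contra hc
    push_neg at hc
    obtain ⟨z, hzV, hznot⟩ := hc
    obtain ⟨k, hk, -⟩ := key x hxV x hxV
    have hxk : x k ≠ 0 := by
      intro h0; rw [h0, norm_zero] at hk; exact absurd hk.symm (ne_of_gt hxpos)
    set w : Fin n → 𝕜 := z - (z k / x k) • x with hw
    have hwV : w ∈ V := V.sub_mem hzV (V.smul_mem _ hxV)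
    have hw0 : w ≠ 0 := by
      intro h0
      exact hznot (z k / x k) (by rwa [hw, sub_eq_zero] at h0)
    have hwk : w k = 0 := by
      simp only [hw, Pi.sub_apply, Pi.smul_apply, smul_eq_mul]
      field_simp
      ring
    have hwpos : (0:ℝ) < ‖w‖ := norm_pos_iff.2 hw0
    -- bound on the non-attaining coordinates
    set bnn : NNReal := (Finset.univ.filter (fun j => ‖x j‖ ≠ ‖x‖)).sup fun j => ‖x j‖₊
      with hbnn
    set b : ℝ := (bnn : ℝ) with hbdef
    have hbx : b < ‖x‖ := by
      rw [hbdef, ← coe_nnnorm x, NNReal.coe_lt_coe]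
      refine Finset.sup_lt_iff ?_ |>.2 fun j hj => ?_
      · simpa using hx0
      · have hj' := (Finset.mem_filter.1 hj).2
        have : ‖x j‖ < ‖x‖ := lt_of_le_of_ne (norm_le_pi_norm x j) hj'
        rwa [← coe_nnnorm x, ← coe_nnnorm (x j), NNReal.coe_lt_coe] at this
    have hble : ∀ j, ‖x j‖ ≠ ‖x‖ → ‖x j‖ ≤ b := by
      intro j hj
      rw [hbdef, ← coe_nnnorm (x j), NNReal.coe_le_coe]
      exact Finset.le_sup (f := fun j => ‖x j‖₊) (Finset.mem_filter.2 ⟨Finset.mem_univ j, hj⟩)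
    set t0 : ℝ := (‖x‖ - b) / ‖w‖ with ht0def
    have ht0 : 0 < t0 := div_pos (by linarith) hwpos
    -- for small positive t, every max coordinate of x stays a max coordinate of x + t w,
    -- with the same norm
    have hstep : ∀ t : ℝ, 0 < t → t < t0 → ∀ j, ‖x j‖ = ‖x‖ →
        ‖x j + (t:𝕜) * w j‖ = ‖x j‖ := by
      intro t ht htl j hj
      set v : Fin n → 𝕜 := x + (t:𝕜) • w with hv
      have hvV : v ∈ V := V.add_mem hxV (V.smul_mem _ hwV)
      have hvk : v k = x k := by
        simp [hv, hwk]
      have hxv : ‖x‖ ≤ ‖v‖ := by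
        rw [← hk, ← hvk]; exact norm_le_pi_norm v k
      have hv0 : v ≠ 0 := by
        intro h0
        rw [h0, norm_zero] at hxv; linarith
      have htw : t * ‖w‖ < ‖x‖ - b := (lt_div_iff₀ hwpos).1 htl
      have hsub : A v ⊆ A x := by
        intro i hi
        have hiv : ‖v i‖ = ‖v‖ := (Finset.mem_filter.1 hi).2
        refine Finset.mem_filter.2 ⟨Finset.mem_univ i, ?_⟩
        by_contra hix
        have h1 : ‖v i‖ ≤ ‖x i‖ + t * ‖w i‖ := by
          calc ‖v i‖ = ‖x i + (t:𝕜) * w i‖ := by simp [hv, smul_eq_mul, RCLike.real_smul_eq_coe_mul]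
            _ ≤ ‖x i‖ + ‖(t:𝕜) * w i‖ := norm_add_le _ _
            _ = ‖x i‖ + t * ‖w i‖ := by
                rw [norm_mul, RCLike.norm_ofReal, abs_of_pos ht]
        have h2 : ‖w i‖ ≤ ‖w‖ := norm_le_pi_norm w i
        have h3 : ‖x i‖ ≤ b := hble i hix
        have : ‖v i‖ < ‖x‖ := by nlinarith
        rw [hiv] at this; linarith
      have hcc : (A x).card ≤ (A v).card := hcard ▸ hmin v hvV hv0
      have hAeq : A v = A x := Finset.eq_of_subset_of_card_le hsub hcc
      have hkAx : k ∈ A x := Finset.mem_filter.2 ⟨Finset.mem_univ k, hk⟩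
      have hkAv : k ∈ A v := by rw [hAeq]; exact hkAx
      have hvx : ‖v‖ = ‖x‖ := by
        have : ‖v k‖ = ‖v‖ := (Finset.mem_filter.1 hkAv).2
        rw [← this, hvk, hk]
      have hjAv : j ∈ A v := by
        rw [hAeq]; exact Finset.mem_filter.2 ⟨Finset.mem_univ j, hj⟩
      have : ‖v j‖ = ‖v‖ := (Finset.mem_filter.1 hjAv).2
      calc ‖x j + (t:𝕜) * w j‖ = ‖v j‖ := by simp [hv, smul_eq_mul, RCLike.real_smul_eq_coe_mul]
        _ = ‖x‖ := by rw [this, hvx]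
        _ = ‖x j‖ := hj.symm
    -- hence w vanishes on all max coordinates of x
    have hwj : ∀ j, ‖x j‖ = ‖x‖ → w j = 0 := by
      intro j hj
      have e1 := hstep (t0/2) (by linarith) (by linarith) j hj
      have e2 := hstep (t0/3) (by linarith) (by linarith) j hj
      have sq : ∀ t : ℝ, ‖x j + (t:𝕜) * w j‖ = ‖x j‖ →
          t^2 * ‖w j‖^2 + 2 * (t * RCLike.re (x j * (starRingEnd 𝕜) (w j))) = 0 := by
        intro t he
        have h1 : RCLike.normSq (x j + (t:𝕜) * w j) = RCLike.normSq (x j) := by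
          rw [RCLike.normSq_eq_def', RCLike.normSq_eq_def', he]
        rw [RCLike.normSq_add] at h1
        have h2 : RCLike.normSq ((t:𝕜) * w j) = t^2 * ‖w j‖^2 := by
          rw [RCLike.normSq_eq_def', norm_mul, RCLike.norm_ofReal, mul_pow, sq_abs]
        have harg : x j * (starRingEnd 𝕜) ((t:𝕜) * w j)
            = (t:𝕜) * (x j * (starRingEnd 𝕜) (w j)) := by
          rw [map_mul, RCLike.conj_ofReal]; ring
        have h3 : RCLike.re (x j * (starRingEnd 𝕜) ((t:𝕜) * w j))
            = t * RCLike.re (x j * (starRingEnd 𝕜) (w j)) := by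
          rw [harg, ← RCLike.real_smul_eq_coe_mul, RCLike.smul_re]
        rw [h2, h3] at h1
        linarith
      have q1 := sq (t0/2) e1
      have q2 := sq (t0/3) e2
      have hwjsq : ‖w j‖^2 = 0 := by
        by_contra hne'
        have hupos : 0 < ‖w j‖^2 := lt_of_le_of_ne (sq_nonneg _) (Ne.symm hne')
        nlinarith [mul_pos (mul_pos ht0 ht0) hupos, q1, q2]
      exact norm_eq_zero.1 (sq_eq_zero_iff.1 hwjsq)
    -- but w must attain its norm on a max coordinate of x: contradiction
    obtain ⟨j, hj1, hj2⟩ := key x hxV w hwV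
    rw [hwj j hj1, norm_zero] at hj2
    exact hw0 (norm_eq_zero.1 hj2.symm)
  -- conclude
  have hle : V ≤ 𝕜 ∙ x := by
    intro z hz
    obtain ⟨c, rfl⟩ := claim z hz
    exact Submodule.mem_span_singleton.2 ⟨c, rfl⟩
  calc Module.finrank 𝕜 V ≤ Module.finrank 𝕜 (𝕜 ∙ x) := Submodule.finrank_mono hle
    _ = 1 := finrank_span_singleton hx0
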